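/- Let η ∈ (0,1), let W be a second-order working set selection, and let (α^(t))_{t ∈ ℕ} be a sequence in R with (f(α^(t)))_{t ∈ ℕ} monotonically increasing. Suppose there are infinitely many t such that α^(t−1) ∉ R* and the double-step gain satisfies f(α^(t+1)) − f(α^(t−1)) ≥ (1 − η²) · g̃_W(α^(t−1)) (inequality in [0, ∞]). Then lim_{t→∞} f(α^(t)) = f*. -/

import Mathlib

open Matrix Filter Topology ENNReal

namespace SMO

noncomputable section

variable {l : ℕ}

/-- The dual SVM objective `f(α) = yᵀα − (1/2) αᵀKα`. -/
def obj (y : Fin l → ℝ) (K : Matrix (Fin l) (Fin l) ℝ) (α : Fin l → ℝ) : ℝ :=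
  y ⬝ᵥ α - (1 / 2) * (α ⬝ᵥ (K *ᵥ α))

/-- The gradient `∇f(α) = y − Kα`. -/
def grad (y : Fin l → ℝ) (K : Matrix (Fin l) (Fin l) ℝ) (α : Fin l → ℝ) : Fin l → ℝ :=
  y - K *ᵥ α

/-- The direction `v_B = e_i − e_j` of a working set `B = (i, j)`. -/
def dir (B : Fin l × Fin l) : Fin l → ℝ :=
  Pi.single B.1 1 - Pi.single B.2 1

/-- Lower bound `L_i = min {0, y_i C}`. -/
def lb (y : Fin l → ℝ) (C : ℝ) (i : Fin l) : ℝ := min 0 (y i * C)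

/-- Upper bound `U_i = max {0, y_i C}`. -/
def ub (y : Fin l → ℝ) (C : ℝ) (i : Fin l) : ℝ := max 0 (y i * C)

/-- The feasible region `R`. -/
def feas (y : Fin l → ℝ) (C : ℝ) : Set (Fin l → ℝ) :=
  {α | (∑ i, α i) = 0 ∧ ∀ i, lb y C i ≤ α i ∧ α i ≤ ub y C i}

/-- `I_up(α) = {i : α_i < U_i}`. -/
def Iup (y : Fin l → ℝ) (C : ℝ) (α : Fin l → ℝ) : Set (Fin l) := {i | α i < ub y C i}

/-- `I_down(α) = {i : α_i > L_i}`. -/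
def Idown (y : Fin l → ℝ) (C : ℝ) (α : Fin l → ℝ) : Set (Fin l) := {i | lb y C i < α i}

/-- The set `B(α)` of working sets feasible at `α`. -/
def wsets (y : Fin l → ℝ) (C : ℝ) (α : Fin l → ℝ) : Set (Fin l × Fin l) :=
  {B | B.1 ∈ Iup y C α ∧ B.2 ∈ Idown y C α ∧ B.1 ≠ B.2}

/-- The optimal value `f* = max {f(α) : α ∈ R}`. -/
def fstar (y : Fin l → ℝ) (K : Matrix (Fin l) (Fin l) ℝ) (C : ℝ) : ℝ :=
  sSup (obj y K '' feas y C)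

/-- The optimal set `R* = {α ∈ R : f(α) = f*}`. -/
def opt (y : Fin l → ℝ) (K : Matrix (Fin l) (Fin l) ℝ) (C : ℝ) : Set (Fin l → ℝ) :=
  {α ∈ feas y C | obj y K α = fstar y K C}

/-- The gap function `ψ(α) = max {v_Bᵀ ∇f(α) : B ∈ B(α)}`. -/
def psi (y : Fin l → ℝ) (K : Matrix (Fin l) (Fin l) ℝ) (C : ℝ) (α : Fin l → ℝ) : ℝ :=
  sSup ((fun B => dir B ⬝ᵥ grad y K α) '' wsets y C α)

/-- The Newton-step gain `g̃_B(α) = (v_Bᵀ∇f(α))² / (2 v_BᵀKv_B) ∈ [0, ∞]`, with the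
conventions `g̃_B(α) = 0` if `v_BᵀKv_B = 0` and `v_Bᵀ∇f(α) = 0`, and `g̃_B(α) = ∞` if
`v_BᵀKv_B = 0` and `v_Bᵀ∇f(α) ≠ 0`. -/
def ngain (y : Fin l → ℝ) (K : Matrix (Fin l) (Fin l) ℝ) (B : Fin l × Fin l)
    (α : Fin l → ℝ) : ℝ≥0∞ :=
  if dir B ⬝ᵥ (K *ᵥ dir B) = 0 then
    (if dir B ⬝ᵥ grad y K α = 0 then 0 else ⊤)
  else ENNReal.ofReal ((dir B ⬝ᵥ grad y K α) ^ 2 / (2 * (dir B ⬝ᵥ (K *ᵥ dir B))))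

/-- A second-order working set selection: on every non-optimal feasible `α` it returns a
working set `W(α) = (i, j) ∈ B(α)` such that `i` maximizes `(∇f(α))_n` over `n ∈ I_up(α)`
and `j` maximizes `g̃_{(i,n)}(α)` over `n ∈ I_down(α) \ {i}`. -/
def IsSecondOrderWSS (y : Fin l → ℝ) (K : Matrix (Fin l) (Fin l) ℝ) (C : ℝ)
    (W : (Fin l → ℝ) → Fin l × Fin l) : Prop :=
  ∀ α ∈ feas y C \ opt y K C,
    W α ∈ wsets y C α ∧
    (∀ n ∈ Iup y C α, grad y K α n ≤ grad y K α (W α).1) ∧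
    (∀ n ∈ Idown y C α, n ≠ (W α).1 → ngain y K ((W α).1, n) α ≤ ngain y K (W α) α)

section Helpers

lemma dir_dot (B : Fin l × Fin l) (w : Fin l → ℝ) :
    dir B ⬝ᵥ w = w B.1 - w B.2 := by
  simp [dir, sub_dotProduct, single_dotProduct]

lemma quad_nonneg {K : Matrix (Fin l) (Fin l) ℝ} (hK : K.PosSemidef) (x : Fin l → ℝ) :
    0 ≤ x ⬝ᵥ (K *ᵥ x) := by
  simpa using hK.dotProduct_mulVec_nonneg x

lemma K_symm {K : Matrix (Fin l) (Fin l) ℝ} (hK : K.PosSemidef) : Kᵀ = K := by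
  have h := hK.1
  rwa [Matrix.IsHermitian, Matrix.conjTranspose_eq_transpose_of_trivial] at h

lemma quad_symm {K : Matrix (Fin l) (Fin l) ℝ} (hK : K.PosSemidef) (x z : Fin l → ℝ) :
    x ⬝ᵥ (K *ᵥ z) = z ⬝ᵥ (K *ᵥ x) := by
  rw [Matrix.dotProduct_mulVec, ← Matrix.vecMul_transpose, K_symm hK,
    dotProduct_comm]

/-- Concavity: `f(β) − f(α) ≤ ∇f(α)ᵀ(β−α)`. -/
lemma concave_bound (y : Fin l → ℝ) {K : Matrix (Fin l) (Fin l) ℝ} (hK : K.PosSemidef)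
    (α β : Fin l → ℝ) :
    obj y K β - obj y K α ≤ grad y K α ⬝ᵥ (β - α) := by
  have hq := quad_nonneg hK (β - α)
  have hs1 := quad_symm hK α β
  have e1 : (β - α) ⬝ᵥ (K *ᵥ (β - α)) =
      β ⬝ᵥ (K *ᵥ β) - 2 * (α ⬝ᵥ (K *ᵥ β)) + α ⬝ᵥ (K *ᵥ α) := by
    rw [Matrix.mulVec_sub, sub_dotProduct, dotProduct_sub,
      dotProduct_sub, hs1]
    ring
  have e2 : grad y K α ⬝ᵥ (β - α) =
      y ⬝ᵥ β - y ⬝ᵥ α - α ⬝ᵥ (K *ᵥ β) + α ⬝ᵥ (K *ᵥ α) := by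
    rw [grad, sub_dotProduct, dotProduct_sub, dotProduct_sub,
      dotProduct_comm (K *ᵥ α) β, ← hs1, dotProduct_comm (K *ᵥ α) α]
    ring
  simp only [obj]
  linarith

end Helpers
section Helpers2

lemma obj_continuous (y : Fin l → ℝ) (K : Matrix (Fin l) (Fin l) ℝ) :
    Continuous (obj y K) := by
  have h1 : Continuous fun α : Fin l → ℝ => y ⬝ᵥ α :=
    continuous_finset_sum _ fun i _ => continuous_const.mul (continuous_apply i)
  have h2 : Continuous fun α : Fin l → ℝ => α ⬝ᵥ (K *ᵥ α) := by
    show Continuous fun α : Fin l → ℝ => ∑ i, α i * ∑ j, K i j * α j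
    apply continuous_finset_sum
    intro i _
    exact (continuous_apply i).mul
      (continuous_finset_sum _ fun j _ => continuous_const.mul (continuous_apply j))
  exact h1.sub (continuous_const.mul h2)

lemma zero_mem_feas (y : Fin l → ℝ) (C : ℝ) : (0 : Fin l → ℝ) ∈ feas y C := by
  refine ⟨by simp, fun i => ?_⟩
  simp only [Pi.zero_apply]
  exact ⟨min_le_left _ _, le_max_left _ _⟩

lemma feas_compact (y : Fin l → ℝ) (C : ℝ) : IsCompact (feas y C) := by
  have he : feas y C = {α : Fin l → ℝ | (∑ i, α i) = 0} ∩
      Set.pi Set.univ (fun i => Set.Icc (lb y C i) (ub y C i)) := by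
    ext α
    simp only [feas, Set.mem_inter_iff, Set.mem_setOf_eq, Set.mem_pi, Set.mem_univ,
      true_implies, Set.mem_Icc]
  rw [he]
  exact (isCompact_univ_pi fun i => isCompact_Icc).inter_left
    (isClosed_eq (continuous_finset_sum _ fun i _ => continuous_apply i) continuous_const)

lemma fstar_spec (y : Fin l → ℝ) (K : Matrix (Fin l) (Fin l) ℝ) (C : ℝ) :
    (∃ β ∈ feas y C, obj y K β = fstar y K C) ∧
      ∀ α ∈ feas y C, obj y K α ≤ fstar y K C := by
  have hne : (feas y C).Nonempty := ⟨0, zero_mem_feas y C⟩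
  obtain ⟨β, hβ, hmax⟩ := (feas_compact y C).exists_isMaxOn hne
    (obj_continuous y K).continuousOn
  have hub : ∀ α ∈ feas y C, obj y K α ≤ obj y K β := fun α hα => hmax hα
  have hbdd : BddAbove (obj y K '' feas y C) := by
    refine ⟨obj y K β, ?_⟩
    rintro x ⟨α, hα, rfl⟩
    exact hub α hα
  have hle : ∀ α ∈ feas y C, obj y K α ≤ fstar y K C := fun α hα =>
    le_csSup hbdd ⟨α, hα, rfl⟩
  have heq : obj y K β = fstar y K C := by
    refine le_antisymm (hle β hβ) ?_
    refine csSup_le (hne.image _) ?_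
    rintro x ⟨α, hα, rfl⟩
    exact hub α hα
  exact ⟨⟨β, hβ, heq⟩, hle⟩

lemma le_psi (y : Fin l → ℝ) (K : Matrix (Fin l) (Fin l) ℝ) (C : ℝ) (α : Fin l → ℝ)
    {B : Fin l × Fin l} (hB : B ∈ wsets y C α) :
    dir B ⬝ᵥ grad y K α ≤ psi y K C α :=
  le_csSup (Set.toFinite _).bddAbove ⟨B, hB, rfl⟩

lemma psi_attained (y : Fin l → ℝ) (K : Matrix (Fin l) (Fin l) ℝ) (C : ℝ) (α : Fin l → ℝ)
    (hne : (wsets y C α).Nonempty) :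
    ∃ B ∈ wsets y C α, dir B ⬝ᵥ grad y K α = psi y K C α := by
  have h := (hne.image (fun B => dir B ⬝ᵥ grad y K α)).csSup_mem (Set.toFinite _)
  obtain ⟨B, hB, hBe⟩ := h
  exact ⟨B, hB, hBe⟩

end Helpers2
section Helpers3

lemma ub_sub_lb (y : Fin l → ℝ) (hy : ∀ i, y i = 1 ∨ y i = -1) {C : ℝ} (hC : 0 < C)
    (i : Fin l) : ub y C i - lb y C i = C := by
  rcases hy i with h | h <;>
    simp [ub, lb, h, max_eq_right hC.le, min_eq_left hC.le,
      max_eq_left (neg_nonpos_of_nonneg hC.le), min_eq_right (neg_nonpos_of_nonneg hC.le)]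

lemma gap_bound (y : Fin l → ℝ) (hy : ∀ i, y i = 1 ∨ y i = -1)
    {K : Matrix (Fin l) (Fin l) ℝ} (hK : K.PosSemidef) {C : ℝ} (hC : 0 < C)
    {α : Fin l → ℝ} (hα : α ∈ feas y C) (hlt : obj y K α < fstar y K C) :
    (wsets y C α).Nonempty ∧ 0 < psi y K C α ∧
      fstar y K C - obj y K α ≤ (l * C) * psi y K C α := by
  classical
  obtain ⟨⟨β, hβ, hβeq⟩, -⟩ := fstar_spec y K C
  set g := grad y K α with hg
  set d : Fin l → ℝ := β - α with hd
  have hconc : fstar y K C - obj y K α ≤ g ⬝ᵥ d := by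
    rw [← hβeq]; exact concave_bound y hK α β
  have hdpos : 0 < g ⬝ᵥ d := lt_of_lt_of_le (by linarith) hconc
  have hsum : ∑ i, d i = 0 := by
    have h1 := hα.1
    have h2 := hβ.1
    simp only [hd, Pi.sub_apply, Finset.sum_sub_distrib, h1, h2, sub_zero]
  set P : Finset (Fin l) := Finset.univ.filter (fun i => 0 < d i) with hP
  set N : Finset (Fin l) := Finset.univ.filter (fun i => d i < 0) with hN
  have hdisj : Disjoint P N := by
    rw [Finset.disjoint_left]
    intro i hi hin
    simp only [hP, Finset.mem_filter, Finset.mem_univ, true_and] at hi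
    simp only [hN, Finset.mem_filter, Finset.mem_univ, true_and] at hin
    linarith
  have hsplit : ∀ w : Fin l → ℝ, ∑ i, d i * w i = ∑ i ∈ P, d i * w i + ∑ i ∈ N, d i * w i := by
    intro w
    rw [← Finset.sum_union hdisj]
    refine (Finset.sum_subset (Finset.subset_univ _) ?_).symm
    intro i _ hi
    have : d i = 0 := by
      simp only [Finset.mem_union, hP, hN, Finset.mem_filter, Finset.mem_univ,
        true_and] at hi
      push_neg at hi
      linarith [hi.1, hi.2]
    simp [this]
  have hsplit0 : ∑ i ∈ P, d i + ∑ i ∈ N, d i = 0 := by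
    have h := hsplit (fun _ => 1)
    simp only [mul_one] at h
    rw [← h, hsum]
  have hgd : g ⬝ᵥ d = ∑ i ∈ P, d i * g i + ∑ i ∈ N, d i * g i := by
    have h : g ⬝ᵥ d = ∑ i, d i * g i := by
      simp [dotProduct, mul_comm]
    rw [h, hsplit]
  have hPne : P.Nonempty := by
    by_contra hPe
    rw [Finset.not_nonempty_iff_eq_empty] at hPe
    have hNs : ∑ i ∈ N, d i = 0 := by
      rw [hPe] at hsplit0; simpa using hsplit0
    have hNe : N = ∅ := by
      by_contra hNe
      have hneg : 0 < ∑ i ∈ N, (-(d i)) :=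
        Finset.sum_pos (fun i hi => by
          simp only [hN, Finset.mem_filter, Finset.mem_univ, true_and] at hi
          linarith) (Finset.nonempty_of_ne_empty hNe)
      rw [Finset.sum_neg_distrib, hNs] at hneg
      simp at hneg
    rw [hPe, hNe] at hgd
    simp only [Finset.sum_empty, add_zero] at hgd
    linarith
  have hs : 0 < ∑ i ∈ P, d i :=
    Finset.sum_pos (fun i hi => by
      simp only [hP, Finset.mem_filter, Finset.mem_univ, true_and] at hi
      exact hi) hPne
  obtain ⟨i0, hi0P, hi0max⟩ := P.exists_max_image g hPne
  obtain ⟨j0, hj0N, hj0min⟩ := N.exists_min_image g (by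
    by_contra hNe
    rw [Finset.not_nonempty_iff_eq_empty] at hNe
    rw [hNe] at hsplit0
    simp only [Finset.sum_empty, add_zero] at hsplit0
    linarith)
  have hdi0 : 0 < d i0 := by
    simp only [hP, Finset.mem_filter, Finset.mem_univ, true_and] at hi0P; exact hi0P
  have hdj0 : d j0 < 0 := by
    simp only [hN, Finset.mem_filter, Finset.mem_univ, true_and] at hj0N; exact hj0N
  have hi0up : i0 ∈ Iup y C α := by
    have h1 : α i0 < β i0 := by
      have := hdi0; simp only [hd, Pi.sub_apply] at this; linarith
    exact lt_of_lt_of_le h1 (hβ.2 i0).2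
  have hj0dn : j0 ∈ Idown y C α := by
    have h1 : β j0 < α j0 := by
      have := hdj0; simp only [hd, Pi.sub_apply] at this; linarith
    exact lt_of_le_of_lt (hβ.2 j0).1 h1
  have hij : i0 ≠ j0 := fun h => by rw [h] at hdi0; linarith
  have hBw : (i0, j0) ∈ wsets y C α := ⟨hi0up, hj0dn, hij⟩
  set s := ∑ i ∈ P, d i with hsdef
  have hNsum : ∑ i ∈ N, d i = -s := by rw [hsdef]; linarith
  have hb1 : ∑ i ∈ P, d i * g i ≤ s * g i0 := by
    rw [hsdef, Finset.sum_mul]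
    refine Finset.sum_le_sum fun i hi => ?_
    have hdi : 0 ≤ d i := by
      simp only [hP, Finset.mem_filter, Finset.mem_univ, true_and] at hi; exact hi.le
    exact mul_le_mul_of_nonneg_left (hi0max i hi) hdi
  have hb2 : ∑ i ∈ N, d i * g i ≤ (-s) * g j0 := by
    rw [← hNsum, Finset.sum_mul]
    refine Finset.sum_le_sum fun i hi => ?_
    have hdi : d i ≤ 0 := by
      simp only [hN, Finset.mem_filter, Finset.mem_univ, true_and] at hi; exact hi.le
    exact mul_le_mul_of_nonpos_left (hj0min i hi) hdi
  have hkey : g ⬝ᵥ d ≤ s * (g i0 - g j0) := by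
    have hring : s * (g i0 - g j0) = s * g i0 + (-s) * g j0 := by ring
    rw [hgd, hring]
    exact add_le_add hb1 hb2
  have hval : g i0 - g j0 ≤ psi y K C α := by
    have h := le_psi y K C α hBw
    rwa [dir_dot] at h
  have hgap0 : 0 < g i0 - g j0 := by nlinarith
  have hpsi0 : 0 < psi y K C α := lt_of_lt_of_le hgap0 hval
  have hsle : s ≤ l * C := by
    have h1 : ∀ i ∈ P, d i ≤ C := by
      intro i _
      have h2 := (hβ.2 i).2
      have h3 := (hα.2 i).1
      have h4 := ub_sub_lb y hy hC i
      simp only [hd, Pi.sub_apply]; linarith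
    have hcard : (P.card : ℝ) ≤ l := by
      have := Finset.card_le_card (Finset.subset_univ P)
      simp only [Finset.card_univ, Fintype.card_fin] at this
      exact_mod_cast this
    calc s ≤ ∑ _i ∈ P, C := Finset.sum_le_sum h1
      _ = P.card * C := by rw [Finset.sum_const, nsmul_eq_mul]
      _ ≤ l * C := mul_le_mul_of_nonneg_right hcard hC.le
  refine ⟨⟨(i0, j0), hBw⟩, hpsi0, ?_⟩
  calc fstar y K C - obj y K α ≤ g ⬝ᵥ d := hconc
    _ ≤ s * (g i0 - g j0) := hkey
    _ ≤ s * psi y K C α := mul_le_mul_of_nonneg_left hval hs.le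
    _ ≤ (l * C) * psi y K C α := mul_le_mul_of_nonneg_right hsle hpsi0.le

end Helpers3

section Helpers4

lemma diag_nonneg {K : Matrix (Fin l) (Fin l) ℝ} (hK : K.PosSemidef) (i : Fin l) :
    0 ≤ K i i := by
  have h := quad_nonneg hK (Pi.single i 1)
  simpa [Matrix.mulVec_single, single_dotProduct] using h

lemma quad_dir_le {K : Matrix (Fin l) (Fin l) ℝ} (hK : K.PosSemidef) (i j : Fin l) :
    dir (i, j) ⬝ᵥ (K *ᵥ dir (i, j)) ≤ 2 * K i i + 2 * K j j := by
  have e1 : ∀ u w : Fin l → ℝ, (u - w) ⬝ᵥ (K *ᵥ (u - w)) =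
      u ⬝ᵥ (K *ᵥ u) - 2 * (u ⬝ᵥ (K *ᵥ w)) + w ⬝ᵥ (K *ᵥ w) := by
    intro u w
    rw [Matrix.mulVec_sub, sub_dotProduct, dotProduct_sub,
      dotProduct_sub, quad_symm hK w u]
    ring
  have e2 : ∀ u w : Fin l → ℝ, (u + w) ⬝ᵥ (K *ᵥ (u + w)) =
      u ⬝ᵥ (K *ᵥ u) + 2 * (u ⬝ᵥ (K *ᵥ w)) + w ⬝ᵥ (K *ᵥ w) := by
    intro u w
    rw [Matrix.mulVec_add, add_dotProduct, dotProduct_add,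
      dotProduct_add, quad_symm hK w u]
    ring
  have hdii : Pi.single i 1 ⬝ᵥ (K *ᵥ Pi.single i (1 : ℝ)) = K i i := by
    simp [Matrix.mulVec_single, single_dotProduct]
  have hdjj : Pi.single j 1 ⬝ᵥ (K *ᵥ Pi.single j (1 : ℝ)) = K j j := by
    simp [Matrix.mulVec_single, single_dotProduct]
  have h1 := quad_nonneg hK (Pi.single i 1 + Pi.single j 1)
  rw [e2, hdii, hdjj] at h1
  show (Pi.single i 1 - Pi.single j 1) ⬝ᵥ (K *ᵥ (Pi.single i 1 - Pi.single j 1)) ≤ _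
  rw [e1, hdii, hdjj]
  linarith

lemma diag_le_M {K : Matrix (Fin l) (Fin l) ℝ} (hK : K.PosSemidef) (i : Fin l) :
    K i i ≤ (∑ k, K k k) + 1 := by
  have h := Finset.single_le_sum (f := fun k => K k k)
    (fun k _ => diag_nonneg hK k) (Finset.mem_univ i)
  linarith

lemma ngain_lower (y : Fin l → ℝ) {K : Matrix (Fin l) (Fin l) ℝ} (hK : K.PosSemidef)
    {C : ℝ} {W : (Fin l → ℝ) → Fin l × Fin l} (hW : IsSecondOrderWSS y K C W)
    {α : Fin l → ℝ} (hαf : α ∈ feas y C) (hαn : α ∉ opt y K C)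
    (hne : (wsets y C α).Nonempty) (hpsi : 0 < psi y K C α) :
    ENNReal.ofReal (psi y K C α ^ 2 / (8 * ((∑ k, K k k) + 1))) ≤ ngain y K (W α) α := by
  obtain ⟨hWw, hWi, hWj⟩ := hW α ⟨hαf, hαn⟩
  obtain ⟨B0, hB0, hB0eq⟩ := psi_attained y K C α hne
  set g := grad y K α with hg
  rw [dir_dot] at hB0eq
  have hgi : g B0.1 ≤ g (W α).1 := hWi B0.1 hB0.1
  have hj0i : B0.2 ≠ (W α).1 := by
    intro h
    rw [h] at hB0eq
    linarith
  have hle2 : ngain y K ((W α).1, B0.2) α ≤ ngain y K (W α) α := hWj B0.2 hB0.2.1 hj0i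
  refine le_trans ?_ hle2
  set M : ℝ := (∑ k, K k k) + 1 with hM
  have hM1 : (1 : ℝ) ≤ M := by
    have : 0 ≤ ∑ k, K k k := Finset.sum_nonneg fun k _ => diag_nonneg hK k
    rw [hM]; linarith
  have hnum : psi y K C α ≤ dir ((W α).1, B0.2) ⬝ᵥ g := by
    rw [dir_dot]
    simp only
    linarith
  have hnum0 : 0 < dir ((W α).1, B0.2) ⬝ᵥ g := lt_of_lt_of_le hpsi hnum
  by_cases hq : dir ((W α).1, B0.2) ⬝ᵥ (K *ᵥ dir ((W α).1, B0.2)) = 0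
  · unfold ngain
    rw [if_pos hq, if_neg hnum0.ne']
    exact le_top
  · have hq0 : 0 < dir ((W α).1, B0.2) ⬝ᵥ (K *ᵥ dir ((W α).1, B0.2)) :=
      lt_of_le_of_ne (quad_nonneg hK _) (Ne.symm hq)
    have hqM : dir ((W α).1, B0.2) ⬝ᵥ (K *ᵥ dir ((W α).1, B0.2)) ≤ 4 * M := by
      have h1 := quad_dir_le hK (W α).1 B0.2
      have h2 := diag_le_M hK (W α).1
      have h3 := diag_le_M hK B0.2
      rw [hM]
      linarith
    unfold ngain
    rw [if_neg hq]
    apply ENNReal.ofReal_le_ofReal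
    have hsq : psi y K C α ^ 2 ≤ (dir ((W α).1, B0.2) ⬝ᵥ g) ^ 2 :=
      pow_le_pow_left₀ hpsi.le hnum 2
    exact div_le_div₀ (sq_nonneg _) hsq (by linarith) (by linarith)

end Helpers4
/-- If `η ∈ (0,1)`, `(f(α^(t)))` is monotonically increasing, and there
are infinitely many `t` with `α^(t) ∉ R*` such that the double-step gain satisfies
`f(α^(t+2)) − f(α^(t)) ≥ (1 − η²) · g̃_W(α^(t))` (inequality in `[0, ∞]`), then
`f(α^(t)) → f*`. -/
theorem convergence_double_step
    (hl : 2 ≤ l) (y : Fin l → ℝ) (hy : ∀ i, y i = 1 ∨ y i = -1)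
    (K : Matrix (Fin l) (Fin l) ℝ) (hK : K.PosSemidef) (C : ℝ) (hC : 0 < C)
    (η : ℝ) (hη : η ∈ Set.Ioo (0 : ℝ) 1)
    (W : (Fin l → ℝ) → Fin l × Fin l) (hW : IsSecondOrderWSS y K C W)
    (a : ℕ → Fin l → ℝ) (ha : ∀ t, a t ∈ feas y C)
    (hmono : Monotone fun t => obj y K (a t))
    (hinf : {t : ℕ |
        a t ∉ opt y K C ∧
        ENNReal.ofReal (1 - η ^ 2) * ngain y K (W (a t)) (a t) ≤
          ENNReal.ofReal (obj y K (a (t + 2)) - obj y K (a t))}.Infinite) :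
    Tendsto (fun t => obj y K (a t)) atTop (𝓝 (fstar y K C)) := by
  obtain ⟨⟨β, hβf, hβeq⟩, hle⟩ := fstar_spec y K C
  have hFle : ∀ t, obj y K (a t) ≤ fstar y K C := fun t => hle _ (ha t)
  have hbdd : BddAbove (Set.range fun t => obj y K (a t)) :=
    ⟨fstar y K C, by rintro x ⟨t, rfl⟩; exact hFle t⟩
  have htend : Tendsto (fun t => obj y K (a t)) atTop (𝓝 (⨆ t, obj y K (a t))) :=
    tendsto_atTop_ciSup hmono hbdd
  have hsup_le : (⨆ t, obj y K (a t)) ≤ fstar y K C := ciSup_le hFle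
  suffices hsup : (⨆ t, obj y K (a t)) = fstar y K C by rw [← hsup]; exact htend
  by_contra hneq
  have hsup_lt : (⨆ t, obj y K (a t)) < fstar y K C := lt_of_le_of_ne hsup_le hneq
  set ε : ℝ := fstar y K C - (⨆ t, obj y K (a t)) with hε
  have hε0 : 0 < ε := by rw [hε]; linarith
  have hlC : 0 < (l : ℝ) * C := by
    have hl0 : (0 : ℝ) < l := by exact_mod_cast (by omega : 0 < l)
    exact mul_pos hl0 hC
  set δ : ℝ := ε / (l * C) with hδ
  have hδ0 : 0 < δ := div_pos hε0 hlC
  set M : ℝ := (∑ k, K k k) + 1 with hM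
  have hM0 : 0 < 8 * M := by
    have h0 : 0 ≤ ∑ k, K k k := Finset.sum_nonneg fun k _ => diag_nonneg hK k
    rw [hM]; linarith
  have hη2 : 0 < 1 - η ^ 2 := by nlinarith [hη.1, hη.2]
  set γ : ℝ := (1 - η ^ 2) * (δ ^ 2 / (8 * M)) with hγ
  have hγ0 : 0 < γ := mul_pos hη2 (div_pos (pow_pos hδ0 2) hM0)
  have hkey : ∀ t, a t ∉ opt y K C →
      ENNReal.ofReal (1 - η ^ 2) * ngain y K (W (a t)) (a t) ≤
        ENNReal.ofReal (obj y K (a (t + 2)) - obj y K (a t)) →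
      γ ≤ obj y K (a (t + 2)) - obj y K (a t) := by
    intro t hnopt hgain
    have hflt : obj y K (a t) < fstar y K C :=
      lt_of_le_of_ne (hFle t) (fun h => hnopt ⟨ha t, h⟩)
    obtain ⟨hne, hpsi0, hgap⟩ := gap_bound y hy hK hC (ha t) hflt
    have hpsiδ : δ ≤ psi y K C (a t) := by
      have h1 : obj y K (a t) ≤ ⨆ t, obj y K (a t) := le_ciSup hbdd t
      have h2 : ε ≤ (l * C) * psi y K C (a t) := by
        rw [hε]; linarith
      rw [hδ, div_le_iff₀ hlC]
      linarith [mul_comm ((l : ℝ) * C) (psi y K C (a t))]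
    have hsq : δ ^ 2 ≤ psi y K C (a t) ^ 2 := pow_le_pow_left₀ hδ0.le hpsiδ 2
    have hofr : ENNReal.ofReal (δ ^ 2 / (8 * M)) ≤ ngain y K (W (a t)) (a t) := by
      refine le_trans (ENNReal.ofReal_le_ofReal ?_) (ngain_lower y hK hW (ha t) hnopt hne hpsi0)
      rw [hM]
      exact div_le_div₀ (sq_nonneg _) hsq (by rw [← hM]; exact hM0) (by rw [← hM])
    have hchain : ENNReal.ofReal γ ≤ ENNReal.ofReal (obj y K (a (t + 2)) - obj y K (a t)) := by
      calc ENNReal.ofReal γ = ENNReal.ofReal (1 - η ^ 2) * ENNReal.ofReal (δ ^ 2 / (8 * M)) := by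
            rw [hγ, ENNReal.ofReal_mul hη2.le]
        _ ≤ ENNReal.ofReal (1 - η ^ 2) * ngain y K (W (a t)) (a t) :=
            mul_le_mul_right hofr _
        _ ≤ _ := hgain
    have hnn : (0 : ℝ) ≤ obj y K (a (t + 2)) - obj y K (a t) :=
      sub_nonneg.mpr (hmono (by omega : t ≤ t + 2))
    exact (ENNReal.ofReal_le_ofReal_iff hnn).mp hchain
  have hstep : ∀ n : ℕ, ∃ t, obj y K (a 0) + n * γ ≤ obj y K (a t) := by
    intro n
    induction n with
    | zero => exact ⟨0, by simp⟩
    | succ n ih =>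
        obtain ⟨t, ht⟩ := ih
        obtain ⟨s, hsS, hs_gt⟩ := hinf.exists_gt t
        have hγs := hkey s hsS.1 hsS.2
        have hms : obj y K (a t) ≤ obj y K (a s) := hmono hs_gt.le
        refine ⟨s + 2, ?_⟩
        push_cast
        linarith
  obtain ⟨n, hn⟩ := exists_nat_gt ((fstar y K C - obj y K (a 0)) / γ)
  obtain ⟨t, ht⟩ := hstep n
  have hn' : fstar y K C - obj y K (a 0) < n * γ := by
    rw [div_lt_iff₀ hγ0] at hn
    linarith
  linarith [hFle t]

end

end SMO
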